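/- Let $u:\mathbb{R}\to\mathbb{R}$ be a nonnegative integrable function, differentiable with derivative $u'\in L^2(\mathbb{R})$ and $u\in L^4(\mathbb{R})$, satisfying $\int_{\mathbb{R}}u\,dx = \frac{2\sqrt{2}\,\pi}{3}$. Then $\frac{1}{2}\int_{\mathbb{R}}(u')^2\,dx - \frac{1}{4}\int_{\mathbb{R}}u^4\,dx \ge 0$. -/

import Mathlib

open MeasureTheory

section aux
open intervalIntegral Real

lemma int_half_circle : ∫ x in (0:ℝ)..1, Real.sqrt (1 - x ^ 2) = π / 4 := by
  have h2 : ∫ x in (-1:ℝ)..1, Real.sqrt (1 - x ^ 2) = π / 2 := integral_sqrt_one_sub_sq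
  have hi1 : IntervalIntegrable (fun x : ℝ => Real.sqrt (1 - x ^ 2)) volume (-1) 0 :=
    (Real.continuous_sqrt.comp (by continuity)).intervalIntegrable _ _
  have hi2 : IntervalIntegrable (fun x : ℝ => Real.sqrt (1 - x ^ 2)) volume 0 1 :=
    (Real.continuous_sqrt.comp (by continuity)).intervalIntegrable _ _
  have hsplit := intervalIntegral.integral_add_adjacent_intervals hi1 hi2
  have hneg : ∫ x in (-1:ℝ)..0, Real.sqrt (1 - x ^ 2) = ∫ x in (0:ℝ)..1, Real.sqrt (1 - x ^ 2) := by
    have := intervalIntegral.integral_comp_neg (a := (0:ℝ)) (b := 1)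
      (fun x => Real.sqrt (1 - x ^ 2))
    simp only [neg_zero, neg_neg] at this
    rw [← this]
    congr 1
    ext x
    ring_nf
  rw [hneg, h2] at hsplit
  linarith


lemma hasDerivAt_mul_sqrt {t : ℝ} (ht : 0 ≤ t) :
    HasDerivAt (fun s : ℝ => s * Real.sqrt s) ((3/2) * Real.sqrt t) t := by
  rcases eq_or_lt_of_le ht with h | h
  · subst h
    rw [hasDerivAt_iff_tendsto_slope]
    have key : ∀ x : ℝ, x ≠ 0 → slope (fun s : ℝ => s * Real.sqrt s) 0 x = Real.sqrt x := by
      intro x hx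
      rw [slope_def_field]
      rcases le_or_gt x 0 with h | h
      · rw [Real.sqrt_eq_zero_of_nonpos h]; simp
      · field_simp; rw [Real.sqrt_zero]; ring
    rw [Real.sqrt_zero, mul_zero]
    have : Filter.Tendsto Real.sqrt (nhdsWithin 0 {(0:ℝ)}ᶜ) (nhds 0) := by
      have := Real.continuous_sqrt.continuousAt (x := (0:ℝ))
      simpa using this.continuousWithinAt.tendsto
    refine this.congr' ?_
    filter_upwards [self_mem_nhdsWithin] with x hx
    exact (key x hx).symm
  · have h1 := Real.hasDerivAt_sqrt (ne_of_gt h)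
    have h2 := (hasDerivAt_id' t).mul h1
    refine h2.congr_deriv ?_
    have hs : 0 < Real.sqrt t := Real.sqrt_pos.mpr h
    have hsq : Real.sqrt t * Real.sqrt t = t := Real.mul_self_sqrt (le_of_lt h)
    field_simp
    nlinarith [hsq]

lemma int_sqrt_t_sub_t4 : ∫ t in (0:ℝ)..1, Real.sqrt (t - t ^ 4) = π / 6 := by
  have hsub := intervalIntegral.integral_comp_smul_deriv (a := (0:ℝ)) (b := 1)
    (f := fun s : ℝ => s * Real.sqrt s) (f' := fun s : ℝ => (3/2) * Real.sqrt s)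
    (g := fun w : ℝ => Real.sqrt (1 - w ^ 2))
    (fun x hx => hasDerivAt_mul_sqrt (by
      simp only [Set.uIcc_of_le (by norm_num : (0:ℝ) ≤ 1), Set.mem_Icc] at hx
      exact hx.1))
    (Continuous.continuousOn (by continuity))
    (Real.continuous_sqrt.comp (by continuity))
  simp only [Real.sqrt_zero, mul_zero, zero_mul, Real.sqrt_one, mul_one, one_mul] at hsub
  rw [int_half_circle] at hsub
  have hcongr : ∫ t in (0:ℝ)..1, Real.sqrt (t - t ^ 4)
      = ∫ t in (0:ℝ)..1, (3/2 * Real.sqrt t) • ((fun w : ℝ => Real.sqrt (1 - w ^ 2)) ∘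
        fun s : ℝ => s * Real.sqrt s) t * (2/3) := by
    apply intervalIntegral.integral_congr
    intro t ht
    simp only [Set.uIcc_of_le (by norm_num : (0:ℝ) ≤ 1), Set.mem_Icc] at ht
    have ht0 : 0 ≤ t := ht.1
    have h1 : ((fun w : ℝ => Real.sqrt (1 - w ^ 2)) ∘ fun s : ℝ => s * Real.sqrt s) t
        = Real.sqrt (1 - t ^ 3) := by
      simp only [Function.comp]
      congr 1
      have : (t * Real.sqrt t) ^ 2 = t ^ 3 := by
        rw [mul_pow, Real.sq_sqrt ht0]; ring
      rw [this]
    show Real.sqrt (t - t ^ 4) = (3/2 * Real.sqrt t) • ((fun w : ℝ => Real.sqrt (1 - w ^ 2)) ∘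
      fun s : ℝ => s * Real.sqrt s) t * (2/3)
    rw [smul_eq_mul, h1]
    rw [show t - t ^ 4 = t * (1 - t ^ 3) by ring, Real.sqrt_mul ht0]
    ring
  rw [hcongr, intervalIntegral.integral_mul_const, hsub]
  ring

lemma int_phi_M {M : ℝ} (hM : 0 < M) :
    ∫ s in (0:ℝ)..M, Real.sqrt (s - s ^ 4 / M ^ 3) = M * Real.sqrt M * (π / 6) := by
  have h := intervalIntegral.integral_comp_mul_left
    (fun s : ℝ => Real.sqrt (s - s ^ 4 / M ^ 3)) (ne_of_gt hM) (a := (0:ℝ)) (b := 1)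
  simp only [mul_zero, mul_one] at h
  have hcongr : ∀ t : ℝ, Real.sqrt (M * t - (M * t) ^ 4 / M ^ 3)
      = Real.sqrt M * Real.sqrt (t - t ^ 4) := by
    intro t
    rw [← Real.sqrt_mul hM.le]
    congr 1
    field_simp
  simp only [hcongr] at h
  rw [intervalIntegral.integral_const_mul, int_sqrt_t_sub_t4] at h
  rw [smul_eq_mul, inv_mul_eq_div, eq_div_iff (ne_of_gt hM)] at h
  rw [← h]
  ring

lemma final_alg {A I1 y M3 : ℝ} (hA0 : 0 ≤ A) (hM3 : 0 < M3)
    (hkey : 9 * I1 ^ 2 / 8 * M3 / 9 ≤ (I1 - y) * A) (hBpos : 0 < I1 - y) :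
    y * M3 ≤ 2 * A := by
  have h4 : y * (I1 - y) * M3 ≤ I1 ^ 2 * M3 / 4 := by
    nlinarith [mul_nonneg (sq_nonneg (I1 - 2 * y)) hM3.le]
  have h5 : y * M3 * (I1 - y) ≤ 2 * A * (I1 - y) := by nlinarith
  exact le_of_mul_le_mul_right h5 hBpos

lemma quad_cs {a b c : ℝ} (h : ∀ x : ℝ, 0 ≤ a * x ^ 2 - 2 * b * x + c) : b ^ 2 ≤ a * c := by
  have hd := discrim_le_zero (a := a) (b := -(2 * b)) (c := c) (fun x => by nlinarith [h x])
  unfold discrim at hd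
  nlinarith [hd]

section main

variable (u : ℝ → ℝ)

set_option maxHeartbeats 2000000 in
theorem free_energy_nonneg_at_critical_mass' (hu : ∀ x, 0 ≤ u x)
    (hint : Integrable u) (hdiff : Differentiable ℝ u)
    (hL2 : Integrable (fun x => (deriv u x) ^ 2))
    (hL4 : Integrable (fun x => u x ^ 4))
    (hmass : ∫ x, u x = 2 * Real.sqrt 2 * Real.pi / 3) :
    0 ≤ (1 / 2) * (∫ x, (deriv u x) ^ 2) - (1 / 4) * ∫ x, u x ^ 4 := by
  set A := ∫ x, (deriv u x) ^ 2 with hA_def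
  set I1 := ∫ x, u x with hI1_def
  set I4 := ∫ x, u x ^ 4 with hI4_def
  have hA0 : 0 ≤ A := integral_nonneg fun x => sq_nonneg _
  have hI40 : 0 ≤ I4 := integral_nonneg fun x => by positivity
  have hI1pos : 0 < I1 := by
    rw [hmass]; positivity
  have hcont : Continuous u := hdiff.continuous
  have hu'meas : AEStronglyMeasurable (deriv u) volume :=
    (measurable_deriv u).aestronglyMeasurable
  -- interval integrability of deriv u
  have hu'int : ∀ a b : ℝ, IntervalIntegrable (deriv u) volume a b := by
    intro a b
    apply IntervalIntegrable.mono_fun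
      (f := fun x => (1 + (deriv u x) ^ 2) / 2)
      (((_root_.intervalIntegrable_const (c := (1:ℝ))).add hL2.intervalIntegrable).div_const 2)
      hu'meas.restrict
    filter_upwards with x
    rw [Real.norm_eq_abs, Real.norm_eq_abs,
      abs_of_nonneg (show (0:ℝ) ≤ (1 + deriv u x ^ 2) / 2 by positivity)]
    nlinarith [sq_nonneg (|deriv u x| - 1), sq_abs (deriv u x)]
  -- FTC for u
  have hftc : ∀ a b : ℝ, ∫ x in a..b, deriv u x = u b - u a := fun a b =>
    integral_deriv_eq_sub (fun x _ => hdiff x) (hu'int a b)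
  -- Hölder-1/2 estimate
  have holder : ∀ a b : ℝ, a ≤ b → (u b - u a) ^ 2 ≤ (b - a) * A := by
    intro a b hab
    set T := ∫ x in a..b, |deriv u x| with hT_def
    have habs : ∀ x, |deriv u x| = ‖deriv u x‖ := fun x => (Real.norm_eq_abs _).symm
    have hTint : IntervalIntegrable (fun x => |deriv u x|) volume a b := (hu'int a b).abs
    have hD_le : (∫ x in a..b, (deriv u x) ^ 2) ≤ A := by
      rw [integral_of_le hab]
      exact setIntegral_le_integral hL2 (Filter.Eventually.of_forall fun x => sq_nonneg _)
    have hT2 : T ^ 2 ≤ (b - a) * ∫ x in a..b, (deriv u x) ^ 2 := by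
      apply quad_cs
      intro lam
      have hexp : ∀ x : ℝ, (|deriv u x| - lam) ^ 2
          = (deriv u x) ^ 2 - 2 * lam * |deriv u x| + lam ^ 2 := by
        intro x; rw [sub_sq, sq_abs]; ring
      have hnn : 0 ≤ ∫ x in a..b, (|deriv u x| - lam) ^ 2 :=
        intervalIntegral.integral_nonneg hab fun x _ => sq_nonneg _
      have heq : (∫ x in a..b, (|deriv u x| - lam) ^ 2)
          = (∫ x in a..b, (deriv u x) ^ 2) - 2 * lam * T + (b - a) * lam ^ 2 := by
        simp_rw [hexp]
        rw [intervalIntegral.integral_add (((hL2.intervalIntegrable).sub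
            ((hTint.const_mul (2 * lam)))) ) intervalIntegrable_const,
          intervalIntegral.integral_sub (hL2.intervalIntegrable)
            (hTint.const_mul (2 * lam)),
          intervalIntegral.integral_const_mul, intervalIntegral.integral_const]
        rw [hT_def]; ring_nf
      rw [heq] at hnn
      linarith
    have hTnn : 0 ≤ T := intervalIntegral.integral_nonneg hab fun x _ => abs_nonneg _
    have habsle : |u b - u a| ≤ T := by
      rw [← hftc a b]
      calc |∫ x in a..b, deriv u x| ≤ ∫ x in a..b, |deriv u x| :=
            intervalIntegral.abs_integral_le_integral_abs hab
        _ = T := rfl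
    have h1 : (u b - u a) ^ 2 ≤ T ^ 2 := by
      rw [← sq_abs (u b - u a)]
      exact pow_le_pow_left₀ (abs_nonneg _) habsle 2
    have h2 : (b - a) * (∫ x in a..b, (deriv u x) ^ 2) ≤ (b - a) * A :=
      mul_le_mul_of_nonneg_left hD_le (by linarith)
    linarith
  -- boundedness
  have hbd3 : ∀ x, u x ^ 3 ≤ 8 * (A + 1) * I1 := by
    intro x
    rcases eq_or_lt_of_le (hu x) with hK | hK
    · rw [← hK]
      have h0 : (0:ℝ) ^ 3 = 0 := by norm_num
      rw [h0]
      have : 0 ≤ 8 * (A + 1) * I1 := by positivity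
      linarith
    · have hApos : (0:ℝ) < A + 1 := by linarith
      obtain ⟨r, hr_def⟩ : ∃ r, r = u x ^ 2 / (4 * (A + 1)) := ⟨_, rfl⟩
      have hrpos : 0 < r := by rw [hr_def]; positivity
      have hlow : ∀ y ∈ Set.Ioc x (x + r), u x / 2 ≤ u y := by
        intro y hy
        have hxy : x ≤ y := hy.1.le
        have h1 : (u y - u x) ^ 2 ≤ r * A := by
          calc (u y - u x) ^ 2 ≤ (y - x) * A := holder x y hxy
            _ ≤ r * A := mul_le_mul_of_nonneg_right (by linarith [hy.2]) hA0
        have h2 : r * A ≤ u x ^ 2 / 4 := by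
          rw [hr_def, div_mul_eq_mul_div, div_le_div_iff₀ (by positivity) (by norm_num)]
          nlinarith [sq_nonneg (u x)]
        nlinarith [h1, h2, hK]
      have hconst : ∫ _y in Set.Ioc x (x + r), (u x / 2) = (u x / 2) * r := by
        rw [setIntegral_const, measureReal_def, Real.volume_Ioc,
          ENNReal.toReal_ofReal (by linarith : (0:ℝ) ≤ x + r - x), smul_eq_mul]
        ring
      have hmono : (u x / 2) * r ≤ ∫ y in Set.Ioc x (x + r), u y := by
        rw [← hconst]
        exact setIntegral_mono_on
          ((integrableOn_const_iff).mpr (Or.inr (by rw [Real.volume_Ioc]; exact ENNReal.ofReal_lt_top)))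
          hint.integrableOn measurableSet_Ioc hlow
      have hle : ∫ y in Set.Ioc x (x + r), u y ≤ I1 :=
        setIntegral_le_integral hint (Filter.Eventually.of_forall hu)
      have heqr : (u x / 2) * r = u x ^ 3 / (8 * (A + 1)) := by
        rw [hr_def]; field_simp; ring
      rw [heqr] at hmono
      have hfin : u x ^ 3 / (8 * (A + 1)) ≤ I1 := le_trans hmono hle
      rw [div_le_iff₀ (by positivity)] at hfin
      nlinarith [hfin]
  have hbdd : BddAbove (Set.range u) := by
    refine ⟨max 1 (8 * (A + 1) * I1), ?_⟩
    rintro _ ⟨x, rfl⟩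
    rcases le_or_gt (u x) 1 with h | h
    · exact le_max_of_le_left h
    · refine le_max_of_le_right ?_
      calc u x ≤ u x ^ 3 := by nlinarith [mul_nonneg (mul_nonneg (hu x) (by linarith : (0:ℝ) ≤ u x - 1)) (by linarith [hu x] : (0:ℝ) ≤ u x + 1)]
        _ ≤ _ := hbd3 x
  set M := sSup (Set.range u) with hM_def
  have hM_ub : ∀ x, u x ≤ M := fun x => le_csSup hbdd ⟨x, rfl⟩
  have hMpos : 0 < M := by
    by_contra hM
    push_neg at hM
    have : ∀ x, u x = 0 := fun x => le_antisymm (le_trans (hM_ub x) hM) (hu x)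
    have h0 : I1 = 0 := by
      rw [hI1_def]; simp only [this]; exact integral_zero _ _
    rw [h0] at hI1pos; exact lt_irrefl 0 hI1pos
  have hM3 : 0 < M ^ 3 := by positivity
  -- the weight function g
  set g : ℝ → ℝ := fun s => Real.sqrt (s - s ^ 4 / M ^ 3) with hg_def
  have hgcont : Continuous g := Real.continuous_sqrt.comp (by continuity)
  have hg_nonneg : ∀ s, 0 ≤ g s := fun s => Real.sqrt_nonneg _
  have harg_nonneg : ∀ x, 0 ≤ u x - u x ^ 4 / M ^ 3 := by
    intro x
    have h3 : u x ^ 3 ≤ M ^ 3 := pow_le_pow_left₀ (hu x) (hM_ub x) 3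
    have h1 : u x ^ 4 ≤ u x * M ^ 3 := by nlinarith [mul_le_mul_of_nonneg_left h3 (hu x)]
    rw [sub_nonneg, div_le_iff₀ hM3]
    linarith
  have hgu_sq : ∀ x, g (u x) ^ 2 = u x - u x ^ 4 / M ^ 3 := fun x =>
    Real.sq_sqrt (harg_nonneg x)
  have hg_le_sqrtM : ∀ s, 0 ≤ s → s ≤ M → g s ≤ Real.sqrt M := by
    intro s hs hsM
    apply Real.sqrt_le_sqrt
    have : 0 ≤ s ^ 4 / M ^ 3 := by positivity
    linarith
  -- integrability of g(u)^2 etc.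
  have hgu2_eq : (fun x => g (u x) ^ 2) = fun x => u x - u x ^ 4 / M ^ 3 :=
    funext fun x => hgu_sq x
  have hgu2_int : Integrable (fun x => g (u x) ^ 2) := by
    rw [hgu2_eq]; exact hint.sub (hL4.div_const _)
  set B := I1 - I4 / M ^ 3 with hB_def
  have hB_val : ∫ x, g (u x) ^ 2 = B := by
    rw [hgu2_eq, MeasureTheory.integral_sub hint (hL4.div_const _), MeasureTheory.integral_div]
  -- the key function h = g(u) * u'
  set w : ℝ → ℝ := fun x => g (u x) * deriv u x with hh_def
  have hh_meas : AEStronglyMeasurable w volume :=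
    ((hgcont.comp hcont).aestronglyMeasurable).mul hu'meas
  have hh_int : Integrable w := by
    apply Integrable.mono' ((hgu2_int.add hL2).div_const 2) hh_meas
    filter_upwards with x
    show ‖g (u x) * deriv u x‖ ≤ (g (u x) ^ 2 + (deriv u x) ^ 2) / 2
    rw [Real.norm_eq_abs, abs_mul, abs_of_nonneg (hg_nonneg (u x))]
    nlinarith [sq_nonneg (g (u x) - |deriv u x|), sq_abs (deriv u x),
      abs_nonneg (deriv u x), hg_nonneg (u x)]
  set T := ∫ x, |w x| with hT_def
  have hT0 : 0 ≤ T := integral_nonneg fun x => abs_nonneg _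
  have habs_int : Integrable (fun x => |w x|) := hh_int.abs
  -- Cauchy-Schwarz : T^2 ≤ B * A
  have hCS : T ^ 2 ≤ B * A := by
    apply quad_cs
    intro lam
    have hexp : ∀ x : ℝ, (|deriv u x| - lam * g (u x)) ^ 2
        = (deriv u x) ^ 2 - 2 * lam * |w x| + lam ^ 2 * g (u x) ^ 2 := by
      intro x
      have h1 : |w x| = g (u x) * |deriv u x| := by
        show |g (u x) * deriv u x| = _
        rw [abs_mul, abs_of_nonneg (hg_nonneg (u x))]
      rw [h1, sub_sq, sq_abs, mul_pow]
      ring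
    have hnn : 0 ≤ ∫ x, (|deriv u x| - lam * g (u x)) ^ 2 :=
      integral_nonneg fun x => sq_nonneg _
    have heq : (∫ x, (|deriv u x| - lam * g (u x)) ^ 2)
        = A - 2 * lam * T + lam ^ 2 * B := by
      simp_rw [hexp]
      have hsub : Integrable (fun x => (deriv u x) ^ 2 - 2 * lam * |w x|) :=
        hL2.sub (habs_int.const_mul (2 * lam))
      have hcm1 : Integrable (fun x => 2 * lam * |w x|) := habs_int.const_mul (2 * lam)
      have hcm2 : Integrable (fun x => lam ^ 2 * g (u x) ^ 2) := hgu2_int.const_mul (lam ^ 2)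
      rw [MeasureTheory.integral_add hsub hcm2,
        MeasureTheory.integral_sub hL2 hcm1,
        MeasureTheory.integral_const_mul, MeasureTheory.integral_const_mul,
        hB_val, ← hA_def, ← hT_def]
    rw [heq] at hnn
    linarith
  -- Phi and total variation bound : 2 * Φ M ≤ T
  set Φ : ℝ → ℝ := fun t => ∫ s in (0:ℝ)..t, g s with hΦ_def
  have hTV : 2 * Φ M ≤ T := by
    have hΦd : ∀ t : ℝ, HasDerivAt Φ (g t) t := by
      intro t
      rw [hΦ_def]
      exact (hgcont.integral_hasStrictDerivAt 0 t).hasDerivAt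
    have hcomp : ∀ x : ℝ, HasDerivAt (fun y => Φ (u y)) (w x) x := fun x =>
      (hΦd (u x)).comp x (hdiff x).hasDerivAt
    have hftcΦ : ∀ a b : ℝ, ∫ x in a..b, w x = Φ (u b) - Φ (u a) := fun a b =>
      intervalIntegral.integral_eq_sub_of_hasDerivAt (fun x _ => hcomp x)
        hh_int.intervalIntegrable
    have habs2 : ∀ a b : ℝ, a ≤ b → |Φ (u b) - Φ (u a)| ≤ ∫ x in a..b, |w x| := by
      intro a b hab
      rw [← hftcΦ a b]
      exact intervalIntegral.abs_integral_le_integral_abs hab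
    have hIocT : ∀ a b : ℝ, a ≤ b → (∫ x in a..b, |w x|) ≤ T := by
      intro a b hab
      rw [intervalIntegral.integral_of_le hab, hT_def]
      exact setIntegral_le_integral habs_int (Filter.Eventually.of_forall fun x => abs_nonneg _)
    have key1 : ∀ a x₀ b : ℝ, a ≤ x₀ → x₀ ≤ b →
        2 * Φ (u x₀) ≤ T + Φ (u a) + Φ (u b) := by
      intro a x₀ b h1 h2
      have hA1 : Φ (u x₀) - Φ (u a) ≤ ∫ x in a..x₀, |w x| :=
        le_trans (le_abs_self _) (habs2 a x₀ h1)
      have hA2 : Φ (u x₀) - Φ (u b) ≤ ∫ x in x₀..b, |w x| := by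
        calc Φ (u x₀) - Φ (u b) ≤ |Φ (u b) - Φ (u x₀)| := by
              rw [abs_sub_comm]; exact le_abs_self _
          _ ≤ _ := habs2 x₀ b h2
      have hsum : (∫ x in a..x₀, |w x|) + (∫ x in x₀..b, |w x|) = ∫ x in a..b, |w x| :=
        intervalIntegral.integral_add_adjacent_intervals habs_int.intervalIntegrable
          habs_int.intervalIntegrable
      have h3 := hIocT a b (le_trans h1 h2)
      linarith
    have hΦle : ∀ t : ℝ, 0 ≤ t → t ≤ M → Φ t ≤ Real.sqrt M * t := by
      intro t ht htM
      rw [hΦ_def]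
      calc (∫ s in (0:ℝ)..t, g s) ≤ ∫ s in (0:ℝ)..t, Real.sqrt M := by
            apply intervalIntegral.integral_mono_on ht (hgcont.intervalIntegrable _ _)
              _root_.intervalIntegrable_const
            intro s hs
            exact hg_le_sqrtM s hs.1 (le_trans hs.2 htM)
        _ = Real.sqrt M * t := by rw [intervalIntegral.integral_const, smul_eq_mul]; ring
    have hsmall_r : ∀ ε : ℝ, 0 < ε → ∀ c : ℝ, ∃ x, c ≤ x ∧ u x < ε := by
      intro ε hε c
      by_contra hcon
      push_neg at hcon
      obtain ⟨R, hR⟩ : ∃ R : ℝ, R = (I1 + 1) / ε := ⟨_, rfl⟩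
      have hRpos : 0 < R := by rw [hR]; exact div_pos (by linarith) hε
      have hlow : ∀ y ∈ Set.Ioc c (c + R), ε ≤ u y := fun y hy => hcon y hy.1.le
      have hconst : ∫ _y in Set.Ioc c (c + R), ε = ε * R := by
        rw [setIntegral_const, measureReal_def, Real.volume_Ioc,
          ENNReal.toReal_ofReal (by linarith : (0:ℝ) ≤ c + R - c), smul_eq_mul]
        ring
      have hmono : ε * R ≤ ∫ y in Set.Ioc c (c + R), u y := by
        rw [← hconst]
        exact setIntegral_mono_on
          ((integrableOn_const_iff).mpr (Or.inr (by rw [Real.volume_Ioc]; exact ENNReal.ofReal_lt_top)))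
          hint.integrableOn measurableSet_Ioc hlow
      have hle : ∫ y in Set.Ioc c (c + R), u y ≤ I1 :=
        setIntegral_le_integral hint (Filter.Eventually.of_forall hu)
      have hεR : ε * R = I1 + 1 := by rw [hR]; field_simp
      linarith
    have hsmall_l : ∀ ε : ℝ, 0 < ε → ∀ c : ℝ, ∃ x, x ≤ c ∧ u x < ε := by
      intro ε hε c
      by_contra hcon
      push_neg at hcon
      obtain ⟨R, hR⟩ : ∃ R : ℝ, R = (I1 + 1) / ε := ⟨_, rfl⟩
      have hRpos : 0 < R := by rw [hR]; exact div_pos (by linarith) hε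
      have hlow : ∀ y ∈ Set.Ioc (c - R) c, ε ≤ u y := fun y hy => hcon y hy.2
      have hconst : ∫ _y in Set.Ioc (c - R) c, ε = ε * R := by
        rw [setIntegral_const, measureReal_def, Real.volume_Ioc,
          ENNReal.toReal_ofReal (by linarith : (0:ℝ) ≤ c - (c - R)), smul_eq_mul]
        ring
      have hmono : ε * R ≤ ∫ y in Set.Ioc (c - R) c, u y := by
        rw [← hconst]
        exact setIntegral_mono_on
          ((integrableOn_const_iff).mpr (Or.inr (by rw [Real.volume_Ioc]; exact ENNReal.ofReal_lt_top)))
          hint.integrableOn measurableSet_Ioc hlow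
      have hle : ∫ y in Set.Ioc (c - R) c, u y ≤ I1 :=
        setIntegral_le_integral hint (Filter.Eventually.of_forall hu)
      have hεR : ε * R = I1 + 1 := by rw [hR]; field_simp
      linarith
    have hstep : ∀ x₀ : ℝ, ∀ ε : ℝ, 0 < ε → 2 * Φ (u x₀) ≤ T + 2 * Real.sqrt M * ε := by
      intro x₀ ε hε
      obtain ⟨a, ha, hua⟩ := hsmall_l ε hε x₀
      obtain ⟨b, hb, hub⟩ := hsmall_r ε hε x₀
      have h1 := key1 a x₀ b ha hb
      have h2 : Φ (u a) ≤ Real.sqrt M * ε :=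
        le_trans (hΦle (u a) (hu a) (hM_ub a))
          (mul_le_mul_of_nonneg_left hua.le (Real.sqrt_nonneg M))
      have h3 : Φ (u b) ≤ Real.sqrt M * ε :=
        le_trans (hΦle (u b) (hu b) (hM_ub b))
          (mul_le_mul_of_nonneg_left hub.le (Real.sqrt_nonneg M))
      linarith
    have hsup : ∀ δ : ℝ, 0 < δ → ∃ x₀, M - δ < u x₀ := by
      intro δ hδ
      have hlt : M - δ < sSup (Set.range u) := by rw [← hM_def]; linarith
      obtain ⟨v, hv, hx⟩ := exists_lt_of_lt_csSup (Set.range_nonempty u) hlt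
      obtain ⟨x₀, rfl⟩ := hv
      exact ⟨x₀, hx⟩
    have hΦdiff : ∀ t : ℝ, 0 ≤ t → t ≤ M → Φ M - Φ t ≤ Real.sqrt M * (M - t) := by
      intro t ht htM
      have hsplit : Φ t + (∫ s in t..M, g s) = Φ M := by
        rw [hΦ_def]
        exact intervalIntegral.integral_add_adjacent_intervals
          (hgcont.intervalIntegrable _ _) (hgcont.intervalIntegrable _ _)
      have hbound : (∫ s in t..M, g s) ≤ Real.sqrt M * (M - t) := by
        calc (∫ s in t..M, g s) ≤ ∫ s in t..M, Real.sqrt M := by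
              apply intervalIntegral.integral_mono_on htM (hgcont.intervalIntegrable _ _)
                _root_.intervalIntegrable_const
              intro s hs
              exact hg_le_sqrtM s (le_trans ht hs.1) hs.2
          _ = Real.sqrt M * (M - t) := by
              rw [intervalIntegral.integral_const, smul_eq_mul]; ring
      linarith
    have hfinal2 : ∀ η : ℝ, 0 < η → 2 * Φ M ≤ T + η := by
      intro η hη
      obtain ⟨ε, hε_def⟩ : ∃ ε : ℝ, ε = η / (4 * (Real.sqrt M + 1)) := ⟨_, rfl⟩
      have hs1 : (0:ℝ) < Real.sqrt M + 1 := by positivity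
      have hεpos : 0 < ε := by rw [hε_def]; positivity
      obtain ⟨x₀, hx₀⟩ := hsup ε hεpos
      have h1 := hstep x₀ ε hεpos
      have h2 := hΦdiff (u x₀) (hu x₀) (hM_ub x₀)
      have h3 : Real.sqrt M * (M - u x₀) ≤ Real.sqrt M * ε :=
        mul_le_mul_of_nonneg_left (by linarith) (Real.sqrt_nonneg M)
      have h4 : 4 * Real.sqrt M * ε ≤ η := by
        have hdiv : Real.sqrt M / (Real.sqrt M + 1) ≤ 1 := by
          rw [div_le_one hs1]; linarith
        calc 4 * Real.sqrt M * ε = η * (Real.sqrt M / (Real.sqrt M + 1)) := by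
              rw [hε_def]; field_simp
          _ ≤ η * 1 := mul_le_mul_of_nonneg_left hdiv hη.le
          _ = η := mul_one η
      linarith
    by_contra hcon
    push_neg at hcon
    have := hfinal2 ((2 * Φ M - T) / 2) (by linarith)
    linarith
  have hΦM : Φ M = M * Real.sqrt M * (π / 6) := by
    rw [hΦ_def]
    exact int_phi_M hMpos
  -- final algebra
  have hI1sq : I1 ^ 2 = 8 * π ^ 2 / 9 := by
    rw [hmass]
    rw [div_pow]
    rw [show (2 * Real.sqrt 2 * π) ^ 2 = 4 * (Real.sqrt 2 ^ 2) * π ^ 2 by ring,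
      Real.sq_sqrt (by norm_num : (0:ℝ) ≤ 2)]
    ring
  have hS2 : (M * Real.sqrt M) ^ 2 = M ^ 3 := by
    rw [mul_pow, Real.sq_sqrt hMpos.le]; ring
  clear_value A I1 I4 M B T
  have hkey : π ^ 2 * M ^ 3 / 9 ≤ B * A := by
    have hTV' : 2 * (M * Real.sqrt M * (π / 6)) ≤ T := by rw [← hΦM]; exact hTV
    have h1 : (2 * (M * Real.sqrt M * (π / 6))) ^ 2 ≤ T ^ 2 :=
      pow_le_pow_left₀ (by positivity) hTV' 2
    calc π ^ 2 * M ^ 3 / 9 = (2 * (M * Real.sqrt M * (π / 6))) ^ 2 := by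
          rw [mul_pow, mul_pow, hS2]; ring
      _ ≤ T ^ 2 := h1
      _ ≤ B * A := hCS
  have hBpos : 0 < B := by
    rcases lt_or_ge 0 B with h | h
    · exact h
    · exfalso
      have : B * A ≤ 0 := mul_nonpos_of_nonpos_of_nonneg h hA0
      nlinarith [hkey, mul_pos (pow_pos Real.pi_pos 2) hM3]
  -- conclude 2 A ≥ I4
  have hfinal : I4 ≤ 2 * A := by
    have hpi : π ^ 2 = 9 * I1 ^ 2 / 8 := by rw [hI1sq]; ring
    rw [hpi, hB_def] at hkey
    rw [hB_def] at hBpos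
    have hres := final_alg hA0 hM3 hkey hBpos
    calc I4 = I4 / M ^ 3 * M ^ 3 := by field_simp
      _ ≤ 2 * A := hres
  linarith

end main


end aux

/-- At the critical mass `M_c = 2√2 π / 3` (for `m = 3`), the free energy
`F(u) = (1/2)∫ (u')² - (1/4)∫ u⁴` of any nonnegative integrable differentiable
function `u` with `u' ∈ L²`, `u ∈ L⁴` and `∫ u = M_c` is nonnegative. -/
theorem free_energy_nonneg_at_critical_mass (u : ℝ → ℝ) (hu : ∀ x, 0 ≤ u x)
    (hint : Integrable u) (hdiff : Differentiable ℝ u)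
    (hL2 : Integrable (fun x => (deriv u x) ^ 2))
    (hL4 : Integrable (fun x => u x ^ 4))
    (hmass : ∫ x, u x = 2 * Real.sqrt 2 * Real.pi / 3) :
    0 ≤ (1 / 2) * (∫ x, (deriv u x) ^ 2) - (1 / 4) * ∫ x, u x ^ 4 :=
  free_energy_nonneg_at_critical_mass' u hu hint hdiff hL2 hL4 hmass
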